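/- If ⟨z^−, e⟩ ≥ ‖w‖, then the projection of (−z,−w) onto M equals (z^−, −w). -/

import Mathlib

lemma nsq {n : ℕ} (x : EuclideanSpace ℝ (Fin n)) : ‖x‖^2 = ∑ i, (x i)^2 := by
  rw [EuclideanSpace.norm_eq, Real.sq_sqrt (by positivity)]
  simp [sq_abs]

lemma aux_le (t y : ℝ) (hy : 0 ≤ y) : (t - max t 0) ^ 2 ≤ (t - y) ^ 2 := by
  rcases le_total t 0 with ht | ht
  · rw [max_eq_right ht]; nlinarith
  · rw [max_eq_left ht]; nlinarith

lemma aux_eq (t y : ℝ) (hy : 0 ≤ y) (h : (t - y) ^ 2 ≤ (t - max t 0) ^ 2) :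
    y = max t 0 := by
  rcases le_total t 0 with ht | ht
  · rw [max_eq_right ht] at *; nlinarith
  · rw [max_eq_left ht] at *; nlinarith

theorem proj_M_case2
    (p q : ℕ) (hp : 0 < p) (hq : 0 < q)
    (M : Set (EuclideanSpace ℝ (Fin p) × EuclideanSpace ℝ (Fin q)))
    (hM : M = {yv | ‖yv.2‖ ≤ ∑ i : Fin p, yv.1 i ∧ ∀ i : Fin p, 0 ≤ yv.1 i})
    (z : EuclideanSpace ℝ (Fin p)) (w : EuclideanSpace ℝ (Fin q))
    (h : ‖w‖ ≤ ∑ i : Fin p, max (-z i) 0) :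
    (((WithLp.equiv 2 _).symm (fun i => max (-z i) 0), -w) ∈ M ∧
      (∀ a ∈ M, ‖(-z) - (WithLp.equiv 2 _).symm (fun i => max (-z i) 0)‖ ^ 2 + ‖(-w) - (-w)‖ ^ 2
          ≤ ‖(-z) - a.1‖ ^ 2 + ‖(-w) - a.2‖ ^ 2)) ∧
      ∀ b ∈ M, (∀ a ∈ M, ‖(-z) - b.1‖ ^ 2 + ‖(-w) - b.2‖ ^ 2 ≤ ‖(-z) - a.1‖ ^ 2 + ‖(-w) - a.2‖ ^ 2) →
        b = ((WithLp.equiv 2 _).symm (fun i => max (-z i) 0), -w) := by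
  subst hM
  set u : EuclideanSpace ℝ (Fin p) := (WithLp.equiv 2 _).symm (fun i => max (-z i) 0) with hu
  have hui : ∀ i, u i = max (-z i) 0 := fun i => rfl
  have hmem : (u, -w) ∈ {yv : EuclideanSpace ℝ (Fin p) × EuclideanSpace ℝ (Fin q) |
      ‖yv.2‖ ≤ ∑ i : Fin p, yv.1 i ∧ ∀ i : Fin p, 0 ≤ yv.1 i} := by
    exact ⟨by simpa [hui] using h, fun i => le_max_right _ _⟩
  have hnormu : ‖(-z) - u‖ ^ 2 = ∑ i, (-z i - max (-z i) 0) ^ 2 := by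
    rw [nsq]
    exact Finset.sum_congr rfl fun i _ => by simp [hui i, PiLp.sub_apply, PiLp.neg_apply]
  have hle : ∀ a : EuclideanSpace ℝ (Fin p) × EuclideanSpace ℝ (Fin q),
      (∀ i, 0 ≤ a.1 i) → ‖(-z) - u‖ ^ 2 ≤ ‖(-z) - a.1‖ ^ 2 := by
    intro a ha
    rw [hnormu, nsq]
    apply Finset.sum_le_sum
    intro i _
    have : ((-z) - a.1) i = -z i - a.1 i := by simp [PiLp.sub_apply, PiLp.neg_apply]
    rw [this]
    exact aux_le (-z i) (a.1 i) (ha i)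
  refine ⟨⟨hmem, ?_⟩, ?_⟩
  · intro a ha
    have h1 := hle a ha.2
    have h2 : (0:ℝ) ≤ ‖(-w) - a.2‖ ^ 2 := by positivity
    simp only [sub_self, norm_zero]
    nlinarith
  · intro b hb hmin
    have key := hmin (u, -w) hmem
    simp only [sub_self, norm_zero] at key
    have h1 := hle b hb.2
    have h2 : ‖(-w) - b.2‖ ^ 2 ≤ 0 := by nlinarith
    have hb2 : b.2 = -w := by
      have : ‖(-w) - b.2‖ = 0 := by nlinarith [norm_nonneg ((-w) - b.2)]
      have := norm_sub_eq_zero_iff.mp this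
      exact this.symm
    have heq : ‖(-z) - b.1‖ ^ 2 = ‖(-z) - u‖ ^ 2 := by nlinarith [norm_nonneg ((-w) - b.2)]
    have hsum : ∑ i, (-z i - max (-z i) 0) ^ 2 = ∑ i, (-z i - b.1 i) ^ 2 := by
      rw [← hnormu, ← heq, nsq]
      exact Finset.sum_congr rfl fun i _ => by simp [PiLp.sub_apply, PiLp.neg_apply]
    have hterm := (Finset.sum_eq_sum_iff_of_le
      (fun i (_ : i ∈ Finset.univ) => aux_le (-z i) (b.1 i) (hb.2 i))).mp hsum
    have hb1 : b.1 = u := by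
      ext i
      rw [hui i]
      exact aux_eq (-z i) (b.1 i) (hb.2 i) (le_of_eq (hterm i (Finset.mem_univ i)).symm)
    exact Prod.ext hb1 hb2
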